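/- There exists a c.e. partial order ≤_P on ℕ that has no infinite chain and such that every infinite antichain C for ≤_P computes the halting set, i.e., ∅' ≤_T C. -/

import Mathlib

namespace CEOrders

/-- The coded set of a binary relation on ℕ, via the pairing function `Nat.pair`. -/
def codedSet (R : ℕ → ℕ → Prop) : Set ℕ := {n | R n.unpair.1 n.unpair.2}

/-- A set of naturals is c.e. (computably enumerable). -/
def SetCE (A : Set ℕ) : Prop := REPred (· ∈ A)

/-- A set of naturals is co-c.e. -/
def SetCoCE (A : Set ℕ) : Prop := REPred (· ∉ A)

/-- A set of naturals is computable. -/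
def SetComputable (A : Set ℕ) : Prop := ComputablePred (· ∈ A)

/-- A partial order on ℕ: reflexive, antisymmetric, transitive. -/
def PartialOrderRel (R : ℕ → ℕ → Prop) : Prop :=
  (∀ a, R a a) ∧ (∀ a b, R a b → R b a → a = b) ∧ (∀ a b c, R a b → R b c → R a c)

/-- A preorder on ℕ: reflexive, transitive. -/
def PreorderRel (R : ℕ → ℕ → Prop) : Prop :=
  (∀ a, R a a) ∧ (∀ a b c, R a b → R b c → R a c)

/-- A (simple, undirected) graph on ℕ: irreflexive, symmetric. -/
def GraphRel (R : ℕ → ℕ → Prop) : Prop :=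
  (∀ a, ¬ R a a) ∧ (∀ a b, R a b → R b a)

/-- Isomorphism of binary relations on ℕ. -/
def Isomorphic (R Q : ℕ → ℕ → Prop) : Prop :=
  ∃ f : ℕ → ℕ, Function.Bijective f ∧ ∀ a b, R a b ↔ Q (f a) (f b)

/-- A chain for a relation: any two elements comparable. -/
def ChainFor (R : ℕ → ℕ → Prop) (C : Set ℕ) : Prop :=
  ∀ a ∈ C, ∀ b ∈ C, R a b ∨ R b a

/-- An antichain for a relation: any two distinct elements incomparable. -/
def AntichainFor (R : ℕ → ℕ → Prop) (C : Set ℕ) : Prop :=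
  ∀ a ∈ C, ∀ b ∈ C, a ≠ b → ¬ R a b ∧ ¬ R b a

/-- Partial functions computable relative to an oracle `g`. -/
inductive RecursiveIn (g : ℕ →. ℕ) : (ℕ →. ℕ) → Prop
  | zero : RecursiveIn g (pure 0)
  | succ : RecursiveIn g Nat.succ
  | left : RecursiveIn g ↑fun n : ℕ => n.unpair.1
  | right : RecursiveIn g ↑fun n : ℕ => n.unpair.2
  | oracle : RecursiveIn g g
  | pair {f h} : RecursiveIn g f → RecursiveIn g h →
      RecursiveIn g fun n => Nat.pair <$> f n <*> h n
  | comp {f h} : RecursiveIn g f → RecursiveIn g h →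
      RecursiveIn g fun n => h n >>= f
  | prec {f h} : RecursiveIn g f → RecursiveIn g h →
      RecursiveIn g (Nat.unpaired fun a n =>
        n.rec (f a) fun y IH => do let i ← IH; h (Nat.pair a (Nat.pair y i)))
  | rfind {f} : RecursiveIn g f →
      RecursiveIn g fun a => Nat.rfind fun n => (fun m => m = 0) <$> f (Nat.pair a n)

open Classical in
/-- The characteristic (partial) function of a set of naturals. -/
noncomputable def charFun (A : Set ℕ) : ℕ →. ℕ :=
  fun n => Part.some (if n ∈ A then 1 else 0)

/-- Turing reducibility between sets of naturals. -/
def TuringLE (A B : Set ℕ) : Prop := RecursiveIn (charFun B) (charFun A)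

/-- Turing equivalence between sets of naturals. -/
def TuringEquiv (A B : Set ℕ) : Prop := TuringLE A B ∧ TuringLE B A

/-- The halting set ∅'. -/
def HaltingSet : Set ℕ :=
  {n | ((Denumerable.ofNat Nat.Partrec.Code n).eval n).Dom}

/-- A relation on ℕ is automorphically nontrivial. -/
def AutNontrivial (R : ℕ → ℕ → Prop) : Prop :=
  ¬ ∃ F : Finset ℕ, ∀ f : ℕ → ℕ, Function.Bijective f → (∀ x ∈ F, f x = x) →
      ∀ a b, R a b ↔ R (f a) (f b)

/-! ### Auxiliary construction -/

section Construction

open Nat.Partrec (Code)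
open Nat.Partrec.Code

/-- `e` halts on itself within `s` steps (boolean). -/
def haltsb (e s : ℕ) : Bool := (Nat.Partrec.Code.evaln s (Denumerable.ofNat Code e) e).isSome

/-- `e` halts on itself within `s` steps. -/
def halts (e s : ℕ) : Prop := haltsb e s = true

/-- `e` halts on itself. -/
def haltsEver (e : ℕ) : Prop := ∃ s, halts e s

lemma halts_mono {e s t : ℕ} (h : s ≤ t) (hs : halts e s) : halts e t := by
  unfold halts haltsb at *
  rw [Option.isSome_iff_exists] at *
  obtain ⟨x, hx⟩ := hs
  exact ⟨x, evaln_mono h hx⟩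

lemma mem_haltingSet {e : ℕ} : e ∈ HaltingSet ↔ haltsEver e := by
  constructor
  · intro h
    obtain ⟨x, hx⟩ := Part.dom_iff_mem.1 h
    obtain ⟨k, hk⟩ := evaln_complete.1 hx
    exact ⟨k, by unfold halts haltsb; rw [Option.isSome_iff_exists]; exact ⟨x, hk⟩⟩
  · rintro ⟨s, hs⟩
    unfold halts haltsb at hs
    rw [Option.isSome_iff_exists] at hs
    obtain ⟨x, hx⟩ := hs
    exact Part.dom_iff_mem.2 ⟨x, evaln_complete.2 ⟨s, hx⟩⟩

/-- Boolean version of `Qap`. -/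
def Qb (s m : ℕ) : ℕ → Bool
  | 0 => true
  | k + 1 => Qb s m k && (!(haltsb k s) || haltsb k m)

/-- Every `e < k` that halts by stage `s` halts by stage `m`. -/
def Qap (s k m : ℕ) : Prop := ∀ e < k, halts e s → halts e m

/-- Every `e < k` that ever halts, halts by stage `m`. -/
def Qinf (k m : ℕ) : Prop := ∀ e < k, haltsEver e → halts e m

lemma Qb_iff {s m k : ℕ} : Qb s m k = true ↔ Qap s k m := by
  induction k with
  | zero => simp [Qb, Qap]
  | succ k ih =>
    unfold Qb
    rw [Bool.and_eq_true, ih]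
    constructor
    · rintro ⟨h1, h2⟩ e he hes
      rcases Nat.lt_succ_iff_lt_or_eq.1 he with h | h
      · exact h1 e h hes
      · subst h
        rw [Bool.or_eq_true] at h2
        rcases h2 with h | h
        · exact absurd hes (by simpa [halts] using h)
        · exact h
    · intro h
      refine ⟨fun e he => h e (Nat.lt_succ_of_lt he), ?_⟩
      rw [Bool.or_eq_true]
      by_cases hk : halts k s
      · exact Or.inr (h k (Nat.lt_succ_self k) hk)
      · exact Or.inl (by simpa [halts] using hk)

lemma Qap_mono_m {s k m m' : ℕ} (h : m ≤ m') (hq : Qap s k m) : Qap s k m' :=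
  fun e he hes => halts_mono h (hq e he hes)

lemma Qinf_mono_m {k m m' : ℕ} (h : m ≤ m') (hq : Qinf k m) : Qinf k m' :=
  fun e he hes => halts_mono h (hq e he hes)

lemma Qinf_anti_k {k k' m : ℕ} (h : k ≤ k') (hq : Qinf k' m) : Qinf k m :=
  fun e he => hq e (lt_of_lt_of_le he h)

lemma qinf_ex (k : ℕ) : ∃ m, Qinf k m := by
  induction k with
  | zero => exact ⟨0, fun e he => absurd he (Nat.not_lt_zero e)⟩
  | succ k ih =>
    obtain ⟨m, hm⟩ := ih
    by_cases hk : haltsEver k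
    · obtain ⟨t, ht⟩ := hk
      refine ⟨max m t, fun e he hev => ?_⟩
      rcases Nat.lt_succ_iff_lt_or_eq.1 he with h | h
      · exact halts_mono (le_max_left m t) (hm e h hev)
      · subst h; exact halts_mono (le_max_right m t) ht
    · refine ⟨m, fun e he hev => ?_⟩
      rcases Nat.lt_succ_iff_lt_or_eq.1 he with h | h
      · exact hm e h hev
      · subst h; exact absurd hev hk

/-- The settling time of the first `k` inputs. -/
noncomputable def sig (k : ℕ) : ℕ := @Nat.find _ (Classical.decPred _) (qinf_ex k)

lemma sig_spec (k : ℕ) : Qinf k (sig k) := @Nat.find_spec _ (Classical.decPred _) (qinf_ex k)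

lemma sig_min' {k m : ℕ} (h : Qinf k m) : sig k ≤ m :=
  @Nat.find_min' _ (Classical.decPred _) (qinf_ex k) m h

lemma sig_le_iff {k x : ℕ} : sig k ≤ x ↔ Qinf k x :=
  ⟨fun h => Qinf_mono_m h (sig_spec k), sig_min'⟩

lemma sig_mono {k l : ℕ} (h : k ≤ l) : sig k ≤ sig l :=
  sig_min' (Qinf_anti_k h (sig_spec l))

/-- The `k`-th boundary stage. -/
noncomputable def sk (k : ℕ) : ℕ := sig k + k

lemma sk_strictMono : StrictMono sk := fun k l h =>
  Nat.add_lt_add_of_le_of_lt (sig_mono (le_of_lt h)) h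

lemma sk_mono {k l : ℕ} (h : k ≤ l) : sk k ≤ sk l := sk_strictMono.monotone h

lemma sk_ge (k : ℕ) : k ≤ sk k := Nat.le_add_left k (sig k)

lemma sk_zero : sk 0 = 0 := by
  have : sig 0 ≤ 0 := sig_min' (fun e he => absurd he (Nat.not_lt_zero e))
  simp [sk, Nat.le_zero.1 this]

/-- Boolean version of `Dap` (bounded quantifier up to `b`). -/
def Dbaux (a b s : ℕ) : ℕ → Bool
  | 0 => true
  | k + 1 => Dbaux a b s k && ((decide (k ≤ a) && Qb s (a - k) k) || !(Qb s (b - k) k))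

def Db (a b s : ℕ) : Bool := Dbaux a b s (b + 1)

/-- Approximation at stage `s` to "no boundary in `(a, b]`". -/
def Dap (a b s : ℕ) : Prop := ∀ k ≤ b, (k ≤ a ∧ Qap s k (a - k)) ∨ ¬ Qap s k (b - k)

lemma Dbaux_iff {a b s t : ℕ} :
    Dbaux a b s t = true ↔ ∀ k < t, (k ≤ a ∧ Qap s k (a - k)) ∨ ¬ Qap s k (b - k) := by
  induction t with
  | zero => simp [Dbaux]
  | succ t ih =>
    unfold Dbaux
    rw [Bool.and_eq_true, ih]
    constructor
    · rintro ⟨h1, h2⟩ k hk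
      rcases Nat.lt_succ_iff_lt_or_eq.1 hk with h | h
      · exact h1 k h
      · subst h
        rw [Bool.or_eq_true] at h2
        rcases h2 with h | h
        · rw [Bool.and_eq_true, decide_eq_true_eq, Qb_iff] at h
          exact Or.inl h
        · rw [Bool.not_eq_true'] at h
          exact Or.inr (fun hq => by rw [Qb_iff.2 hq] at h; exact Bool.false_ne_true h.symm)
    · intro h
      refine ⟨fun k hk => h k (Nat.lt_succ_of_lt hk), ?_⟩
      rw [Bool.or_eq_true]
      rcases h t (Nat.lt_succ_self t) with ⟨h1, h2⟩ | h1
      · exact Or.inl (by rw [Bool.and_eq_true, decide_eq_true_eq, Qb_iff]; exact ⟨h1, h2⟩)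
      · refine Or.inr ?_
        rw [Bool.not_eq_true']
        by_contra hne
        exact h1 (Qb_iff.1 (Bool.of_not_eq_false hne))

lemma Db_iff {a b s : ℕ} : Db a b s = true ↔ Dap a b s := by
  rw [Db, Dbaux_iff]
  constructor
  · exact fun h k hk => h k (Nat.lt_succ_of_le hk)
  · exact fun h k hk => h k (Nat.lt_succ_iff.1 hk)

/-- Boolean matrix of the partial order. -/
def Pb (n s : ℕ) : Bool :=
  (n.unpair.1 == n.unpair.2) ||
    (decide (n.unpair.1 < n.unpair.2) && decide (n.unpair.2 ≤ s) && Db n.unpair.1 n.unpair.2 s)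

/-- The c.e. partial order. -/
def pord (a b : ℕ) : Prop := a = b ∨ (a < b ∧ ∃ s, b ≤ s ∧ Dap a b s)

lemma Pb_iff {n s : ℕ} :
    Pb n s = true ↔ (n.unpair.1 = n.unpair.2 ∨
      (n.unpair.1 < n.unpair.2 ∧ n.unpair.2 ≤ s ∧ Dap n.unpair.1 n.unpair.2 s)) := by
  unfold Pb
  rw [Bool.or_eq_true, Bool.and_eq_true, Bool.and_eq_true, beq_iff_eq,
    decide_eq_true_eq, decide_eq_true_eq, Db_iff]
  tauto

lemma pord_iff_exists_Pb {a b : ℕ} : pord a b ↔ ∃ s, Pb (Nat.pair a b) s = true := by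
  constructor
  · rintro (h | ⟨hab, s, hbs, hD⟩)
    · exact ⟨0, Pb_iff.2 (by simp [h])⟩
    · exact ⟨s, Pb_iff.2 (by simp [hab, hbs, hD])⟩
  · rintro ⟨s, hs⟩
    rcases Pb_iff.1 hs with h | ⟨h1, h2, h3⟩
    · exact Or.inl (by simpa using h)
    · exact Or.inr ⟨by simpa using h1, s, by simpa using h2, by simpa using h3⟩

lemma Qap_iff_Qinf {b s k m : ℕ} (hs : sig b ≤ s) (hk : k ≤ b) : Qap s k m ↔ Qinf k m := by
  constructor
  · intro h e he hev
    exact h e he (halts_mono hs (sig_spec b e (lt_of_lt_of_le he hk) hev))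
  · exact fun h e he hes => h e he ⟨s, hes⟩

lemma Dap_mono {a b s s' : ℕ} (hbs : b ≤ s) (hss' : s ≤ s') (hD : Dap a b s) :
    Dap a b s' := by
  intro k hk
  by_cases hcase : ∀ e < k, halts e s' → halts e s
  · have hQ : ∀ m, (Qap s' k m ↔ Qap s k m) := fun m =>
      ⟨fun h e he hes => h e he (halts_mono hss' hes),
       fun h e he hes' => h e he (hcase e he hes')⟩
    rcases hD k hk with ⟨h1, h2⟩ | h1
    · exact Or.inl ⟨h1, (hQ _).2 h2⟩
    · exact Or.inr (fun h => h1 ((hQ _).1 h))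
  · push_neg at hcase
    obtain ⟨e, he, hes', hes⟩ := hcase
    refine Or.inr (fun hq => ?_)
    have : halts e (b - k) := hq e he hes'
    exact hes (halts_mono (le_trans (Nat.sub_le b k) hbs) this)

/-- Limit characterization of the order. -/
lemma pord_iff_lim {a b : ℕ} :
    pord a b ↔ (a = b ∨ (a < b ∧ ∀ k ≤ b, sk k ≤ a ∨ b < sk k)) := by
  have key1 : ∀ k x : ℕ, ((k ≤ x ∧ Qinf k (x - k)) ↔ sk k ≤ x) := by
    intro k x
    constructor
    · rintro ⟨h1, h2⟩
      have := sig_le_iff.2 h2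
      unfold sk; omega
    · intro h
      have hx : k ≤ x := le_trans (sk_ge k) h
      have : sig k ≤ x - k := by unfold sk at h; omega
      exact ⟨hx, sig_le_iff.1 this⟩
  have key2 : ∀ k x : ℕ, k ≤ x → ((¬ Qinf k (x - k)) ↔ x < sk k) := by
    intro k x hkx
    rw [← sig_le_iff]
    unfold sk; omega
  constructor
  · rintro (h | ⟨hab, s, hbs, hD⟩)
    · exact Or.inl h
    · refine Or.inr ⟨hab, fun k hk => ?_⟩
      set s' := max s (sig b) with hs'
      have hD' : Dap a b s' := Dap_mono hbs (le_max_left _ _) hD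
      have hsig : sig b ≤ s' := le_max_right _ _
      rcases hD' k hk with ⟨h1, h2⟩ | h1
      · exact Or.inl ((key1 k a).1 ⟨h1, (Qap_iff_Qinf hsig hk).1 h2⟩)
      · exact Or.inr ((key2 k b hk).1 (fun hq => h1 ((Qap_iff_Qinf hsig hk).2 hq)))
  · rintro (h | ⟨hab, hall⟩)
    · exact Or.inl h
    · refine Or.inr ⟨hab, max b (sig b), le_max_left _ _, fun k hk => ?_⟩
      have hsig : sig b ≤ max b (sig b) := le_max_right _ _
      rcases hall k hk with h | h
      · refine Or.inl ?_
        obtain ⟨h1, h2⟩ := (key1 k a).2 h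
        exact ⟨h1, (Qap_iff_Qinf hsig hk).2 h2⟩
      · refine Or.inr (fun hq => ?_)
        exact (key2 k b hk).2 h ((Qap_iff_Qinf hsig hk).1 hq)

lemma pord_le {a b : ℕ} (h : pord a b) : a ≤ b := by
  rcases h with h | ⟨h, _⟩
  · exact le_of_eq h
  · exact le_of_lt h

lemma pord_refl (a : ℕ) : pord a a := Or.inl rfl

lemma pord_antisymm {a b : ℕ} (h1 : pord a b) (h2 : pord b a) : a = b :=
  le_antisymm (pord_le h1) (pord_le h2)

lemma pord_trans {a b c : ℕ} (h1 : pord a b) (h2 : pord b c) : pord a c := by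
  rcases pord_iff_lim.1 h1 with rfl | ⟨hab, hall1⟩
  · exact h2
  rcases pord_iff_lim.1 h2 with rfl | ⟨hbc, hall2⟩
  · exact h1
  refine pord_iff_lim.2 (Or.inr ⟨lt_trans hab hbc, fun k hk => ?_⟩)
  rcases hall2 k hk with h | h
  · have hkb : k ≤ b := le_trans (sk_ge k) h
    rcases hall1 k hkb with h' | h'
    · exact Or.inl h'
    · omega
  · exact Or.inr h

/-- Not comparable (with `a < b`) yields a boundary in `(a, b]`. -/
lemma gap_of_not_pord {a b : ℕ} (hab : a < b) (h : ¬ pord a b) :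
    ∃ k, a < sk k ∧ sk k ≤ b := by
  rw [pord_iff_lim] at h
  push_neg at h
  obtain ⟨k, hk, h1, h2⟩ := h.2 hab
  exact ⟨k, by omega, by omega⟩

lemma chain_finite {C : Set ℕ} (hC : ChainFor pord C) : C.Finite := by
  rcases Set.eq_empty_or_nonempty C with rfl | ⟨a, ha⟩
  · exact Set.finite_empty
  refine Set.Finite.subset (Set.finite_Iio (max (a + 1) (sk (a + 1)))) ?_
  intro b hb
  simp only [Set.mem_Iio]
  rcases le_or_gt b a with h | h
  · exact lt_of_le_of_lt h (lt_of_lt_of_le (Nat.lt_succ_self a) (le_max_left _ _))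
  · have hpord : pord a b := by
      rcases hC a ha b hb with h' | h'
      · exact h'
      · exact absurd (pord_le h') (by omega)
    rcases pord_iff_lim.1 hpord with h' | ⟨_, hall⟩
    · omega
    by_contra hge
    push_neg at hge
    have hbig : sk (a + 1) ≤ b := le_trans (le_max_right _ _) hge
    have hk : a + 1 ≤ b := le_trans (sk_ge _) hbig
    rcases hall (a + 1) hk with h' | h'
    · have := sk_ge (a + 1); omega
    · omega

open Classical in
/-- Characteristic function (into ℕ). -/
noncomputable def cif (C : Set ℕ) (n : ℕ) : ℕ := if n ∈ C then 1 else 0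

/-- Number of elements of `C` that are `≤ n`. -/
noncomputable def cnt (C : Set ℕ) : ℕ → ℕ
  | 0 => cif C 0
  | n + 1 => cif C (n + 1) + cnt C n

lemma cif_le_one (C : Set ℕ) (n : ℕ) : cif C n ≤ 1 := by
  unfold cif; split <;> omega

lemma cif_of_mem {C : Set ℕ} {n : ℕ} (h : n ∈ C) : cif C n = 1 := by
  unfold cif; simp [h]

lemma cnt_mono (C : Set ℕ) : Monotone (cnt C) := by
  apply monotone_nat_of_le_succ
  intro n
  show cnt C n ≤ cif C (n + 1) + cnt C n
  omega

lemma cnt_max_elt (C : Set ℕ) : ∀ c, 1 ≤ cnt C c → ∃ y ≤ c, y ∈ C ∧ cnt C y = cnt C c := by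
  intro c
  induction c with
  | zero =>
    intro h
    refine ⟨0, le_refl 0, ?_, rfl⟩
    unfold cnt cif at h
    by_contra hc
    simp [hc] at h
  | succ c ih =>
    intro h
    by_cases hc : (c + 1) ∈ C
    · exact ⟨c + 1, le_refl _, hc, rfl⟩
    · have hcnt : cnt C (c + 1) = cnt C c := by
        show cif C (c + 1) + cnt C c = cnt C c
        unfold cif; simp [hc]
      rw [hcnt] at h ⊢
      obtain ⟨y, hy, hyC, hcy⟩ := ih h
      exact ⟨y, le_trans hy (Nat.le_succ c), hyC, hcy⟩

lemma cnt_succ_of_mem {C : Set ℕ} {z : ℕ} (h : (z + 1) ∈ C) :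
    cnt C (z + 1) = 1 + cnt C z := by
  show cif C (z + 1) + cnt C z = 1 + cnt C z
  rw [cif_of_mem h]

/-- Key counting lemma: an antichain with `n+1` elements below `c` pushes `sk n ≤ c`. -/
lemma sk_le_of_cnt {C : Set ℕ} (hC : AntichainFor pord C) :
    ∀ c n, n + 1 ≤ cnt C c → sk n ≤ c := by
  intro c
  induction c using Nat.strong_induction_on with
  | _ c ih =>
    intro n hn
    match n with
    | 0 => rw [sk_zero]; exact Nat.zero_le c
    | m + 1 =>
      obtain ⟨y₁, hy₁c, hy₁C, hcy₁⟩ := cnt_max_elt C c (by omega)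
      match y₁, hy₁C, hcy₁ with
      | 0, hy₁C, hcy₁ =>
        exfalso
        have h0 : cnt C 0 ≤ 1 := cif_le_one C 0
        omega
      | z + 1, hy₁C, hcy₁ =>
        have hz : cnt C (z + 1) = 1 + cnt C z := cnt_succ_of_mem hy₁C
        have hzc : m + 1 ≤ cnt C z := by omega
        obtain ⟨y₂, hy₂z, hy₂C, hcy₂⟩ := cnt_max_elt C z (by omega)
        have hy₂lt : y₂ < c := by omega
        have hskm : sk m ≤ y₂ := ih y₂ hy₂lt m (by omega)
        have hne : y₂ ≠ z + 1 := by omega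
        have hnp : ¬ pord y₂ (z + 1) := (hC y₂ hy₂C (z + 1) hy₁C hne).1
        obtain ⟨j, hj1, hj2⟩ := gap_of_not_pord (by omega) hnp
        have hjm : m < j := by
          by_contra hle
          push_neg at hle
          have := sk_mono hle
          omega
        have := sk_mono (show m + 1 ≤ j from hjm)
        omega

lemma cnt_unbounded {C : Set ℕ} (hInf : C.Infinite) : ∀ N, ∃ c, N ≤ cnt C c := by
  intro N
  induction N with
  | zero => exact ⟨0, Nat.zero_le _⟩
  | succ N ih =>
    obtain ⟨c, hc⟩ := ih
    have : ∃ y ∈ C, c < y := by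
      by_contra h
      push_neg at h
      exact hInf (Set.Finite.subset (Set.finite_Iic c) (fun y hy => h y hy))
    obtain ⟨y, hyC, hyc⟩ := this
    match y, hyC, hyc with
    | z + 1, hyC, hyc =>
      refine ⟨z + 1, ?_⟩
      have h1 : cnt C (z + 1) = 1 + cnt C z := cnt_succ_of_mem hyC
      have h2 : cnt C c ≤ cnt C z := cnt_mono C (by omega)
      omega

/-! ### Computability lemmas -/

lemma RecursiveIn.of_eq {g f f' : ℕ →. ℕ} (h : RecursiveIn g f) (H : ∀ n, f n = f' n) :
    RecursiveIn g f' := (funext H : f = f') ▸ h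

lemma recIn_of_partrec {f : ℕ →. ℕ} (g : ℕ →. ℕ) (h : Nat.Partrec f) : RecursiveIn g f := by
  induction h with
  | zero => exact .zero
  | succ => exact .succ
  | left => exact .left
  | right => exact .right
  | pair _ _ ih1 ih2 => exact .pair ih1 ih2
  | comp _ _ ih1 ih2 => exact .comp ih1 ih2
  | prec _ _ ih1 ih2 => exact .prec ih1 ih2
  | rfind _ ih => exact .rfind ih

lemma recIn_of_computable {f : ℕ → ℕ} (g : ℕ →. ℕ) (h : Computable f) :
    RecursiveIn g ↑f := recIn_of_partrec g (Partrec.nat_iff.1 h)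

lemma primrec₂_haltsb : Primrec₂ haltsb := by
  have h1 : Primrec fun p : ℕ × ℕ => (((p.2, Denumerable.ofNat Code p.1), p.1)) :=
    Primrec.pair (Primrec.pair Primrec.snd ((Primrec.ofNat Code).comp Primrec.fst)) Primrec.fst
  have h2 : Primrec fun p : ℕ × ℕ =>
      Nat.Partrec.Code.evaln p.2 (Denumerable.ofNat Code p.1) p.1 := primrec_evaln.comp h1
  exact Primrec.option_isSome.comp h2

lemma primrec_Qb : Primrec fun q : (ℕ × ℕ) × ℕ => Qb q.1.1 q.1.2 q.2 := by
  have hh : Primrec₂ fun (q : (ℕ × ℕ) × ℕ) (p : ℕ × Bool) =>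
      (p.2 && (!(haltsb p.1 q.1.1) || haltsb p.1 q.1.2)) := by
    have he : Primrec fun x : ((ℕ × ℕ) × ℕ) × ℕ × Bool => x.2.1 := Primrec.fst.comp Primrec.snd
    have hs : Primrec fun x : ((ℕ × ℕ) × ℕ) × ℕ × Bool => x.1.1.1 :=
      Primrec.fst.comp (Primrec.fst.comp Primrec.fst)
    have hm : Primrec fun x : ((ℕ × ℕ) × ℕ) × ℕ × Bool => x.1.1.2 :=
      Primrec.snd.comp (Primrec.fst.comp Primrec.fst)
    have hacc : Primrec fun x : ((ℕ × ℕ) × ℕ) × ℕ × Bool => x.2.2 := Primrec.snd.comp Primrec.snd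
    have t1 : Primrec fun x : ((ℕ × ℕ) × ℕ) × ℕ × Bool => !(haltsb x.2.1 x.1.1.1) :=
      Primrec.not.comp (primrec₂_haltsb.comp he hs)
    have t2 : Primrec fun x : ((ℕ × ℕ) × ℕ) × ℕ × Bool => haltsb x.2.1 x.1.1.2 :=
      primrec₂_haltsb.comp he hm
    have t3 : Primrec fun x : ((ℕ × ℕ) × ℕ) × ℕ × Bool =>
        (!(haltsb x.2.1 x.1.1.1) || haltsb x.2.1 x.1.1.2) :=
      (Primrec.dom_bool₂ (· || ·)).comp t1 t2
    exact ((Primrec.dom_bool₂ (· && ·)).comp hacc t3 : _)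
  have := Primrec.nat_rec' (Primrec.snd :
      Primrec fun q : (ℕ × ℕ) × ℕ => q.2) (Primrec.const true) hh
  refine this.of_eq fun q => ?_
  induction q.2 with
  | zero => rfl
  | succ k ihk =>
    simp only [Qb]
    rw [← ihk]

lemma primrec_Db : Primrec fun q : (ℕ × ℕ) × ℕ => Db q.1.1 q.1.2 q.2 := by
  have hh : Primrec₂ fun (q : (ℕ × ℕ) × ℕ) (p : ℕ × Bool) =>
      (p.2 && ((decide (p.1 ≤ q.1.1) && Qb q.2 (q.1.1 - p.1) p.1) ||
        !(Qb q.2 (q.1.2 - p.1) p.1))) := by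
    have ha : Primrec fun x : ((ℕ × ℕ) × ℕ) × ℕ × Bool => x.1.1.1 :=
      Primrec.fst.comp (Primrec.fst.comp Primrec.fst)
    have hb : Primrec fun x : ((ℕ × ℕ) × ℕ) × ℕ × Bool => x.1.1.2 :=
      Primrec.snd.comp (Primrec.fst.comp Primrec.fst)
    have hs : Primrec fun x : ((ℕ × ℕ) × ℕ) × ℕ × Bool => x.1.2 :=
      Primrec.snd.comp Primrec.fst
    have hk : Primrec fun x : ((ℕ × ℕ) × ℕ) × ℕ × Bool => x.2.1 := Primrec.fst.comp Primrec.snd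
    have hacc : Primrec fun x : ((ℕ × ℕ) × ℕ) × ℕ × Bool => x.2.2 := Primrec.snd.comp Primrec.snd
    have hQ1 : Primrec fun x : ((ℕ × ℕ) × ℕ) × ℕ × Bool => Qb x.1.2 (x.1.1.1 - x.2.1) x.2.1 :=
      primrec_Qb.comp (Primrec.pair (Primrec.pair hs (Primrec.nat_sub.comp ha hk)) hk)
    have hQ2 : Primrec fun x : ((ℕ × ℕ) × ℕ) × ℕ × Bool => Qb x.1.2 (x.1.1.2 - x.2.1) x.2.1 :=
      primrec_Qb.comp (Primrec.pair (Primrec.pair hs (Primrec.nat_sub.comp hb hk)) hk)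
    have hle : Primrec fun x : ((ℕ × ℕ) × ℕ) × ℕ × Bool => decide (x.2.1 ≤ x.1.1.1) :=
      (Primrec.nat_le.comp hk ha).decide
    have t1 : Primrec fun x : ((ℕ × ℕ) × ℕ) × ℕ × Bool =>
        (decide (x.2.1 ≤ x.1.1.1) && Qb x.1.2 (x.1.1.1 - x.2.1) x.2.1) :=
      (Primrec.dom_bool₂ (· && ·)).comp hle hQ1
    have t2 : Primrec fun x : ((ℕ × ℕ) × ℕ) × ℕ × Bool =>
        (!(Qb x.1.2 (x.1.1.2 - x.2.1) x.2.1)) := Primrec.not.comp hQ2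
    have t3 := (Primrec.dom_bool₂ (· || ·)).comp t1 t2
    exact ((Primrec.dom_bool₂ (· && ·)).comp hacc t3 : _)
  have hf : Primrec fun q : (ℕ × ℕ) × ℕ => q.1.2 + 1 :=
    Primrec.succ.comp (Primrec.snd.comp Primrec.fst)
  have := Primrec.nat_rec' hf (Primrec.const true) hh
  refine this.of_eq fun q => ?_
  show _ = Db q.1.1 q.1.2 q.2
  unfold Db
  generalize q.1.2 + 1 = t
  induction t with
  | zero => rfl
  | succ k ihk =>
    simp only [Dbaux]
    rw [← ihk]

lemma computable₂_Pb : Computable₂ Pb := by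
  have hu1 : Primrec fun p : ℕ × ℕ => p.1.unpair.1 :=
    Primrec.fst.comp (Primrec.unpair.comp Primrec.fst)
  have hu2 : Primrec fun p : ℕ × ℕ => p.1.unpair.2 :=
    Primrec.snd.comp (Primrec.unpair.comp Primrec.fst)
  have hs : Primrec fun p : ℕ × ℕ => p.2 := Primrec.snd
  have heq : Primrec fun p : ℕ × ℕ => (p.1.unpair.1 == p.1.unpair.2) := by
    have := (Primrec.eq (α := ℕ)).comp hu1 hu2
    refine this.decide.of_eq fun p => ?_
    exact Bool.eq_iff_iff.2 (by simp)
  have hlt : Primrec fun p : ℕ × ℕ => decide (p.1.unpair.1 < p.1.unpair.2) :=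
    (Primrec.nat_lt.comp hu1 hu2).decide
  have hle : Primrec fun p : ℕ × ℕ => decide (p.1.unpair.2 ≤ p.2) :=
    (Primrec.nat_le.comp hu2 hs).decide
  have hDb : Primrec fun p : ℕ × ℕ => Db p.1.unpair.1 p.1.unpair.2 p.2 :=
    primrec_Db.comp (Primrec.pair (Primrec.pair hu1 hu2) hs)
  have t1 := (Primrec.dom_bool₂ (· && ·)).comp hlt hle
  have t2 := (Primrec.dom_bool₂ (· && ·)).comp t1 hDb
  have t3 := (Primrec.dom_bool₂ (· || ·)).comp heq t2
  exact (t3 : Primrec fun p : ℕ × ℕ => Pb p.1 p.2).to_comp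

lemma setCE_pord : SetCE (codedSet pord) := by
  unfold SetCE REPred
  have hp2 : Partrec₂ fun (n s : ℕ) => ((Pb n s : Part Bool)) := computable₂_Pb.partrec₂
  have hfind := Partrec.rfind hp2
  have hmap := hfind.map ((Computable.const ()).comp Computable.fst).to₂
  refine hmap.of_eq fun n => ?_
  apply Part.ext
  intro u
  simp only [Part.mem_map_iff, Part.mem_assert_iff, Part.mem_some_iff]
  constructor
  · rintro ⟨s, hs, _⟩
    have hPb : Pb n s = true := by
      have := Nat.rfind_spec hs
      simpa using this
    have hmem : n ∈ codedSet pord := by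
      show pord n.unpair.1 n.unpair.2
      rw [pord_iff_exists_Pb]
      exact ⟨s, by simpa using hPb⟩
    exact ⟨hmem, trivial⟩
  · rintro ⟨hmem, hu⟩
    have : pord n.unpair.1 n.unpair.2 := hmem
    rw [pord_iff_exists_Pb] at this
    obtain ⟨s, hs⟩ := this
    have hs' : Pb (Nat.pair n.unpair.1 n.unpair.2) s = true := hs
    rw [Nat.pair_unpair] at hs'
    have hdom : (Nat.rfind fun s => ((Pb n s : Part Bool))).Dom := by
      apply Nat.rfind_dom.2
      exact ⟨s, by simpa using hs', fun {m} _ => trivial⟩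
    obtain ⟨c, hc⟩ := Part.dom_iff_mem.1 hdom
    exact ⟨c, hc, trivial⟩

lemma charFun_eq_cif (A : Set ℕ) (n : ℕ) : charFun A n = Part.some (cif A n) := by
  by_cases h : n ∈ A <;> simp [charFun, cif, h]

lemma turingLE_of_antichain {C : Set ℕ} (hC : AntichainFor pord C) (hInf : C.Infinite) :
    TuringLE HaltingSet C := by
  unfold TuringLE
  set g : ℕ →. ℕ := charFun C with hg
  have hgval : ∀ n, g n = Part.some (cif C n) := fun n => charFun_eq_cif C n
  -- the counting function is recursive in g
  have hbase : RecursiveIn g (fun _ : ℕ => Part.some (cif C 0)) := by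
    have := RecursiveIn.comp (RecursiveIn.oracle (g := g)) RecursiveIn.zero
    refine this.of_eq fun n => ?_
    show (Part.some 0).bind g = _
    exact (Part.bind_some 0 g).trans (hgval 0)
  have husucc : Computable (fun m : ℕ => m.unpair.2.unpair.1 + 1) :=
    (Primrec.succ.comp (Primrec.fst.comp (Primrec.unpair.comp
      (Primrec.snd.comp Primrec.unpair)))).to_comp
  have hvsnd : Computable (fun m : ℕ => m.unpair.2.unpair.2) :=
    (Primrec.snd.comp (Primrec.unpair.comp (Primrec.snd.comp Primrec.unpair))).to_comp
  have haddc : Computable (fun w : ℕ => w.unpair.1 + w.unpair.2) :=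
    (Primrec.nat_add.comp (Primrec.fst.comp Primrec.unpair)
      (Primrec.snd.comp Primrec.unpair)).to_comp
  have hstep : RecursiveIn g
      (fun m : ℕ => Part.some (cif C (m.unpair.2.unpair.1 + 1) + m.unpair.2.unpair.2)) := by
    have hA1 : RecursiveIn g (fun m : ℕ => Part.some (cif C (m.unpair.2.unpair.1 + 1))) := by
      have := RecursiveIn.comp (RecursiveIn.oracle (g := g)) (recIn_of_computable g husucc)
      refine this.of_eq fun m => ?_
      show (Part.some _).bind g = _
      exact (Part.bind_some _ g).trans (hgval _)
    have hpair := RecursiveIn.pair hA1 (recIn_of_computable g hvsnd)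
    have := RecursiveIn.comp (recIn_of_computable g haddc) hpair
    refine this.of_eq fun m => ?_
    simp [Seq.seq, Part.bind_eq_bind, Part.bind_some, Part.map_some, Nat.unpair_pair]
    exact (Part.bind_some _ _).trans (by simp [PFun.coe_val, Nat.unpair_pair])
  have hprec := RecursiveIn.prec hbase hstep
  have hcnt : RecursiveIn g (fun n : ℕ => Part.some (cnt C n)) := by
    have hpair0 : Computable (fun n : ℕ => Nat.pair 0 n) :=
      (Primrec₂.natPair.comp (Primrec.const 0) Primrec.id).to_comp
    have := RecursiveIn.comp hprec (recIn_of_computable g hpair0)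
    refine this.of_eq fun n => ?_
    show (Part.some (Nat.pair 0 n)).bind _ = _
    rw [Part.bind_some]
    simp only [Nat.unpaired, Nat.unpair_pair]
    induction n with
    | zero => rfl
    | succ n ihn =>
      show (Nat.rec _ _ n : Part ℕ) >>= _ = _
      rw [ihn]
      show (Part.some (cnt C n)).bind _ = _
      rw [Part.bind_some]
      simp [Nat.unpair_pair, cnt]
  -- the search function
  have hfchk : RecursiveIn g
      (fun w : ℕ => Part.some (if w.unpair.1 + 2 ≤ cnt C w.unpair.2 then 0 else 1)) := by
    have h1 : RecursiveIn g (fun w : ℕ => Part.some (cnt C w.unpair.2)) := by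
      have hsnd : Computable (fun w : ℕ => w.unpair.2) :=
        (Primrec.snd.comp Primrec.unpair).to_comp
      have := RecursiveIn.comp hcnt (recIn_of_computable g hsnd)
      refine this.of_eq fun w => ?_
      show (Part.some _).bind _ = _
      rw [Part.bind_some]
    have hfst : Computable (fun w : ℕ => w.unpair.1) :=
      (Primrec.fst.comp Primrec.unpair).to_comp
    have hpairc := RecursiveIn.pair (recIn_of_computable g hfst) h1
    have hdecC : Computable (fun z : ℕ => if z.unpair.1 + 2 ≤ z.unpair.2 then (0 : ℕ) else 1) := by
      apply Primrec.to_comp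
      refine Primrec.ite ?_ (Primrec.const 0) (Primrec.const 1)
      exact Primrec.nat_le.comp
        ((Primrec.nat_add.comp (Primrec.fst.comp Primrec.unpair) (Primrec.const 2)))
        (Primrec.snd.comp Primrec.unpair)
    have := RecursiveIn.comp (recIn_of_computable g hdecC) hpairc
    refine this.of_eq fun w => ?_
    simp [Seq.seq, Part.bind_eq_bind, Part.bind_some, Part.map_some, Nat.unpair_pair]
    exact (Part.bind_some _ _).trans (by simp [PFun.coe_val, Nat.unpair_pair])
  have hrfind := RecursiveIn.rfind hfchk
  have hex : ∀ e : ℕ, ∃ n, e + 2 ≤ cnt C n := fun e => cnt_unbounded hInf (e + 2)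
  have hRval : ∀ e : ℕ,
      (Nat.rfind fun n => (fun m => m = 0) <$>
        (fun w : ℕ => Part.some (if w.unpair.1 + 2 ≤ cnt C w.unpair.2 then 0 else 1))
          (Nat.pair e n)) = Part.some (Nat.find (hex e)) := by
    intro e
    refine Part.eq_some_iff.2 (Nat.mem_rfind.2 ?_)
    constructor
    · have hspec := Nat.find_spec (hex e)
      simp [Nat.unpair_pair, hspec]
    · intro m hm
      have hmin := Nat.find_min (hex e) hm
      simp [Nat.unpair_pair, hmin]
  have hR : RecursiveIn g (fun e : ℕ => Part.some (Nat.find (hex e))) := hrfind.of_eq hRval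
  have hJ := RecursiveIn.pair (recIn_of_computable g Computable.id) hR
  have hans : RecursiveIn g ↑(fun w : ℕ => cond (haltsb w.unpair.1 w.unpair.2) (1 : ℕ) 0) := by
    apply recIn_of_computable
    apply Primrec.to_comp
    exact Primrec.cond
      (primrec₂_haltsb.comp (Primrec.fst.comp Primrec.unpair) (Primrec.snd.comp Primrec.unpair))
      (Primrec.const 1) (Primrec.const 0)
  have hFinal := RecursiveIn.comp hans hJ
  refine hFinal.of_eq fun e => ?_
  have hkey : haltsb e (Nat.find (hex e)) = true ↔ e ∈ HaltingSet := by
    have hc : e + 2 ≤ cnt C (Nat.find (hex e)) := Nat.find_spec (hex e)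
    have hsk : sk (e + 1) ≤ Nat.find (hex e) := sk_le_of_cnt hC (Nat.find (hex e)) (e + 1) hc
    have hsig : sig (e + 1) ≤ Nat.find (hex e) := le_trans (Nat.le_add_right _ _) hsk
    constructor
    · intro h
      exact mem_haltingSet.2 ⟨Nat.find (hex e), h⟩
    · intro h
      exact halts_mono hsig (sig_spec (e + 1) e (Nat.lt_succ_self e) (mem_haltingSet.1 h))
  by_cases hmem : e ∈ HaltingSet
  · have hb : haltsb e (Nat.find (hex e)) = true := hkey.2 hmem
    simp [Seq.seq, Part.bind_eq_bind, Part.bind_some, Part.map_some, Nat.unpair_pair, charFun,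
      hmem, hb]
    exact (Part.bind_some _ _).trans (by simp [PFun.coe_val, Nat.unpair_pair, hb])
  · have hb : haltsb e (Nat.find (hex e)) = false :=
      Bool.eq_false_iff.2 (fun h => hmem (hkey.1 h))
    simp [Seq.seq, Part.bind_eq_bind, Part.bind_some, Part.map_some, Nat.unpair_pair, charFun,
      hmem, hb]
    exact (Part.bind_some _ _).trans (by simp [PFun.coe_val, Nat.unpair_pair, hb])

end Construction

theorem exists_CE_partialOrder_no_infinite_chain_antichains_compute_haltingSet :
    ∃ P : ℕ → ℕ → Prop, PartialOrderRel P ∧ SetCE (codedSet P) ∧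
      (∀ C : Set ℕ, ChainFor P C → C.Finite) ∧
      (∀ C : Set ℕ, AntichainFor P C → C.Infinite → TuringLE HaltingSet C) := by
  refine ⟨pord, ⟨pord_refl, fun a b => pord_antisymm, fun a b c => pord_trans⟩,
    setCE_pord, fun C h => chain_finite h, fun C h hInf => turingLE_of_antichain h hInf⟩

end CEOrders
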